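/- For c > 0, the function φ(y) = 2√c/√(1+c²y²) solves the ODE −φ'' + (c/2) φ³ − (3/16) φ⁵ = 0 on ℝ. -/

import Mathlib

/-- The algebraic-soliton profile of the DNLS equation: for `c > 0`,
`φ(y) = 2√c/√(1 + c²y²)` solves `−φ'' + (c/2) φ³ − (3/16) φ⁵ = 0` pointwise on `ℝ`. -/
theorem algebraic_soliton_profile_solves_ODE (c : ℝ) (hc : 0 < c) :
    ∀ φ : ℝ → ℝ,
      (φ = fun y => 2 * Real.sqrt c / Real.sqrt (1 + c ^ 2 * y ^ 2)) →
      ∀ y, -deriv (deriv φ) y + c / 2 * φ y ^ 3 - 3 / 16 * φ y ^ 5 = 0 := by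
  intro φ hφ y
  subst hφ
  have hu : ∀ x : ℝ, 0 < 1 + c ^ 2 * x ^ 2 := fun x => by positivity
  have hs : ∀ x : ℝ, 0 < Real.sqrt (1 + c ^ 2 * x ^ 2) := fun x => Real.sqrt_pos.mpr (hu x)
  have hsq : ∀ x : ℝ, Real.sqrt (1 + c ^ 2 * x ^ 2) ^ 2 = 1 + c ^ 2 * x ^ 2 :=
    fun x => Real.sq_sqrt (hu x).le
  have hsder : ∀ x : ℝ, HasDerivAt (fun y => Real.sqrt (1 + c ^ 2 * y ^ 2))
      (c ^ 2 * x / Real.sqrt (1 + c ^ 2 * x ^ 2)) x := by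
    intro x
    have h1 : HasDerivAt (fun y : ℝ => 1 + c ^ 2 * y ^ 2) (2 * c ^ 2 * x) x := by
      have := ((hasDerivAt_pow 2 x).const_mul (c ^ 2)).const_add 1
      refine this.congr_deriv ?_; norm_num; ring
    have h2 := h1.sqrt (ne_of_gt (hu x))
    refine h2.congr_deriv ?_
    field_simp
  have hd1 : ∀ x : ℝ, HasDerivAt (fun y => 2 * Real.sqrt c / Real.sqrt (1 + c ^ 2 * y ^ 2))
      (-2 * Real.sqrt c * c ^ 2 * x / Real.sqrt (1 + c ^ 2 * x ^ 2) ^ 3) x := by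
    intro x
    have h := (hasDerivAt_const x (2 * Real.sqrt c)).div (hsder x) (ne_of_gt (hs x))
    refine h.congr_deriv ?_
    field_simp
    ring
  have hφ' : deriv (fun y => 2 * Real.sqrt c / Real.sqrt (1 + c ^ 2 * y ^ 2)) =
      fun x => -2 * Real.sqrt c * c ^ 2 * x / Real.sqrt (1 + c ^ 2 * x ^ 2) ^ 3 :=
    funext fun x => (hd1 x).deriv
  rw [hφ']
  have hnum : HasDerivAt (fun x : ℝ => -2 * Real.sqrt c * c ^ 2 * x)
      (-2 * Real.sqrt c * c ^ 2) y := by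
    have h := (hasDerivAt_id y).const_mul (-2 * Real.sqrt c * c ^ 2)
    simp only [id_eq, mul_one] at h
    exact h
  have hden : HasDerivAt (fun x : ℝ => Real.sqrt (1 + c ^ 2 * x ^ 2) ^ 3)
      (3 * Real.sqrt (1 + c ^ 2 * y ^ 2) ^ 2 * (c ^ 2 * y / Real.sqrt (1 + c ^ 2 * y ^ 2))) y := by
    have := (hsder y).pow 3
    refine this.congr_deriv ?_; norm_num
  have hd2 := hnum.div hden (by positivity)
  rw [show deriv (fun x : ℝ => -2 * Real.sqrt c * c ^ 2 * x / Real.sqrt (1 + c ^ 2 * x ^ 2) ^ 3) y = _ from hd2.deriv]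
  have hsqy := hsq y
  have hcc : Real.sqrt c ^ 2 = c := Real.sq_sqrt hc.le
  have hs0 : Real.sqrt (1 + c ^ 2 * y ^ 2) ≠ 0 := ne_of_gt (hs y)
  field_simp
  linear_combination (96 * Real.sqrt c * c ^ 2) * hsqy +
    (2 * Real.sqrt c * (32 * c * Real.sqrt (1 + c ^ 2 * y ^ 2) ^ 2 - 48 * Real.sqrt c ^ 2 - 48 * c)) * hcc
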